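/- arXiv:1303.5321 — 6 statements merged into one kernel-verified Lean document; each statement's English description precedes it below -/
import Mathlib

section
/- Consider three user pairs with diagonal 2×2 channel matrices H_{i,k} = diag(h_{i,k}^{(1)}, h_{i,k}^{(2)}) having nonzero diagonal entries for all i, k ∈ {1,2,3}. Suppose vectors u_1, u_2, u_3, v_1, v_2, v_3 ∈ ℂ², each a nonzero vector, satisfy the six cross-channel alignment equations u_i† H_{i,k} v_k = 0 for all i ≠ k together with the three direct-channel conditions u_i† H_{i,i} v_i ≠ 0. Then every component of every u_i and every v_k is nonzero. -/
private lemma fin3_ne1 : ∀ i : Fin 3, i ≠ i + 1 := by decide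
private lemma fin3_ne2 : ∀ i : Fin 3, i ≠ i + 2 := by decide
private lemma fin3_ne12 : ∀ i : Fin 3, i + 1 ≠ i + 2 := by decide

private lemma main_aux (g0 g1 : Fin 3 → Fin 3 → ℂ)
    (hg0 : ∀ i k, g0 i k ≠ 0) (hg1 : ∀ i k, g1 i k ≠ 0)
    (u0 u1 v0 v1 : Fin 3 → ℂ)
    (hu : ∀ i, u0 i ≠ 0 ∨ u1 i ≠ 0) (hv : ∀ k, v0 k ≠ 0 ∨ v1 k ≠ 0)
    (halign : ∀ i k, i ≠ k →
      (starRingEnd ℂ) (u0 i) * g0 i k * v0 k +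
        (starRingEnd ℂ) (u1 i) * g1 i k * v1 k = 0)
    (hdirect : ∀ i,
      (starRingEnd ℂ) (u0 i) * g0 i i * v0 i +
        (starRingEnd ℂ) (u1 i) * g1 i i * v1 i ≠ 0)
    (i : Fin 3) : u0 i ≠ 0 ∧ v0 i ≠ 0 := by
  constructor
  · intro hzero
    have hu1 : u1 i ≠ 0 := (hu i).resolve_left (by simp [hzero])
    -- for k ≠ i, v1 k = 0
    have hv1 : ∀ k, i ≠ k → v1 k = 0 := by
      intro k hik
      have := halign i k hik
      rw [hzero] at this
      simp only [map_zero, zero_mul, zero_add, mul_eq_zero, map_eq_zero] at this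
      tauto
    have h1 := hv1 (i + 1) (fin3_ne1 i)
    have h2 := hv1 (i + 2) (fin3_ne2 i)
    have hv02 : v0 (i + 2) ≠ 0 := (hv (i + 2)).resolve_right (by simp [h2])
    have halg := halign (i + 1) (i + 2) (fin3_ne12 i)
    rw [h2] at halg
    simp only [mul_zero, add_zero, mul_eq_zero, map_eq_zero] at halg
    have hu01 : u0 (i + 1) = 0 := by
      rcases halg with (h' | h') | h'
      · exact h'
      · exact absurd h' (hg0 _ _)
      · exact absurd h' hv02
    have := hdirect (i + 1)
    rw [hu01, h1] at this
    simp at this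
  · intro hzero
    have hv1 : v1 i ≠ 0 := (hv i).resolve_left (by simp [hzero])
    -- for k ≠ i, u1 k = 0
    have hu1 : ∀ k, k ≠ i → u1 k = 0 := by
      intro k hki
      have := halign k i hki
      rw [hzero] at this
      simp only [mul_zero, zero_add, mul_eq_zero, map_eq_zero] at this
      tauto
    have h1 := hu1 (i + 1) (fin3_ne1 i).symm
    have h2 := hu1 (i + 2) (fin3_ne2 i).symm
    have hu01 : u0 (i + 1) ≠ 0 := (hu (i + 1)).resolve_right (by simp [h1])
    have halg := halign (i + 1) (i + 2) (fin3_ne12 i)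
    rw [h1] at halg
    simp only [map_zero, zero_mul, add_zero, mul_eq_zero, map_eq_zero] at halg
    have hv02 : v0 (i + 2) = 0 := by
      rcases halg with (h' | h') | h'
      · exact absurd h' hu01
      · exact absurd h' (hg0 _ _)
      · exact h'
    have := hdirect (i + 2)
    rw [hv02, h2] at this
    simp at this

/-- For three user pairs with diagonal 2×2 channels having nonzero
diagonal entries, if nonzero vectors `u i, v k ∈ ℂ²` satisfy the six cross-channel
alignment equations `uᵢ† H_{i,k} v_k = 0` for `i ≠ k` and the three direct-channel
conditions `uᵢ† H_{i,i} v_i ≠ 0`, then every component of every `u i` and `v k`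
is nonzero. -/
theorem alignment_components_nonzero
    (h : Fin 3 → Fin 3 → Fin 2 → ℂ)
    (hne : ∀ i k l, h i k l ≠ 0)
    (u v : Fin 3 → Fin 2 → ℂ)
    (hu : ∀ i, u i ≠ 0) (hv : ∀ k, v k ≠ 0)
    (halign : ∀ i k, i ≠ k →
      (starRingEnd ℂ) (u i 0) * h i k 0 * v k 0 +
        (starRingEnd ℂ) (u i 1) * h i k 1 * v k 1 = 0)
    (hdirect : ∀ i,
      (starRingEnd ℂ) (u i 0) * h i i 0 * v i 0 +
        (starRingEnd ℂ) (u i 1) * h i i 1 * v i 1 ≠ 0) :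
    (∀ i l, u i l ≠ 0) ∧ (∀ k l, v k l ≠ 0) := by
  have hu' : ∀ i, u i 0 ≠ 0 ∨ u i 1 ≠ 0 := by
    intro i
    by_contra hc
    push_neg at hc
    exact hu i (funext fun l => by fin_cases l <;> [exact hc.1; exact hc.2])
  have hv' : ∀ k, v k 0 ≠ 0 ∨ v k 1 ≠ 0 := by
    intro k
    by_contra hc
    push_neg at hc
    exact hv k (funext fun l => by fin_cases l <;> [exact hc.1; exact hc.2])
  have H0 := main_aux (fun i k => h i k 0) (fun i k => h i k 1)
    (fun i k => hne i k 0) (fun i k => hne i k 1)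
    (fun i => u i 0) (fun i => u i 1) (fun k => v k 0) (fun k => v k 1)
    hu' hv' halign hdirect
  have H1 := main_aux (fun i k => h i k 1) (fun i k => h i k 0)
    (fun i k => hne i k 1) (fun i k => hne i k 0)
    (fun i => u i 1) (fun i => u i 0) (fun k => v k 1) (fun k => v k 0)
    (fun i => (hu' i).symm) (fun k => (hv' k).symm)
    (fun i k hik => by linear_combination halign i k hik)
    (fun i hc => hdirect i (by linear_combination hc))
  exact ⟨fun i l => by fin_cases l <;> [exact (H0 i).1; exact (H1 i).1],
         fun k l => by fin_cases l <;> [exact (H0 k).2; exact (H1 k).2]⟩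
end

section
/- Consider three user pairs with nonzero complex cross-channel coefficients h_{i,k}^{(1)}, h_{i,k}^{(2)} for all ordered pairs i ≠ k in {1,2,3}. There exist vectors u_1, u_2, u_3, v_1, v_2, v_3 ∈ ℂ² with all components nonzero satisfying the six alignment equations conj(u_i^{(1)})·h_{i,k}^{(1)}·v_k^{(1)} + conj(u_i^{(2)})·h_{i,k}^{(2)}·v_k^{(2)} = 0 for all i ≠ k, if and only if the channel coefficients satisfy (h_{1,2}^{(2)}/h_{1,2}^{(1)})·(h_{1,3}^{(1)}/h_{1,3}^{(2)})·(h_{2,3}^{(2)}/h_{2,3}^{(1)})·(h_{2,1}^{(1)}/h_{2,1}^{(2)})·(h_{3,1}^{(2)}/h_{3,1}^{(1)})·(h_{3,2}^{(1)}/h_{3,2}^{(2)}) = 1. -/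
set_option maxHeartbeats 2000000 in
/-- For three user pairs with nonzero cross-channel coefficients,
vectors `u_i, v_k ∈ ℂ²` with all components nonzero satisfying the six alignment
equations exist, if and only if the product of cross-channel coefficient ratios
`(h₁₂⁽²⁾/h₁₂⁽¹⁾)(h₁₃⁽¹⁾/h₁₃⁽²⁾)(h₂₃⁽²⁾/h₂₃⁽¹⁾)(h₂₁⁽¹⁾/h₂₁⁽²⁾)(h₃₁⁽²⁾/h₃₁⁽¹⁾)(h₃₂⁽¹⁾/h₃₂⁽²⁾)`
equals 1. (Users are indexed by `0, 1, 2` and subcarriers by `0, 1`.) -/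
theorem alignment_feasibility_three_users
    (h : Fin 3 → Fin 3 → Fin 2 → ℂ)
    (hne : ∀ i k l, i ≠ k → h i k l ≠ 0) :
    (∃ u v : Fin 3 → Fin 2 → ℂ,
      (∀ i l, u i l ≠ 0) ∧ (∀ k l, v k l ≠ 0) ∧
      (∀ i k, i ≠ k →
        (starRingEnd ℂ) (u i 0) * h i k 0 * v k 0 +
          (starRingEnd ℂ) (u i 1) * h i k 1 * v k 1 = 0)) ↔
    (h 0 1 1 / h 0 1 0) * (h 0 2 0 / h 0 2 1) *
      (h 1 2 1 / h 1 2 0) * (h 1 0 0 / h 1 0 1) *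
      (h 2 0 1 / h 2 0 0) * (h 2 1 0 / h 2 1 1) = 1 := by
  have h010 := hne 0 1 0 (by decide)
  have h011 := hne 0 1 1 (by decide)
  have h020 := hne 0 2 0 (by decide)
  have h021 := hne 0 2 1 (by decide)
  have h120 := hne 1 2 0 (by decide)
  have h121 := hne 1 2 1 (by decide)
  have h100 := hne 1 0 0 (by decide)
  have h101 := hne 1 0 1 (by decide)
  have h200 := hne 2 0 0 (by decide)
  have h201 := hne 2 0 1 (by decide)
  have h210 := hne 2 1 0 (by decide)
  have h211 := hne 2 1 1 (by decide)
  have hden : h 0 1 0 * h 0 2 1 * h 1 2 0 * h 1 0 1 * h 2 0 0 * h 2 1 1 ≠ 0 := by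
    simp [h010, h021, h120, h101, h200, h211]
  constructor
  · rintro ⟨u, v, hu, hv, hal⟩
    have E01 := hal 0 1 (by decide)
    have E02 := hal 0 2 (by decide)
    have E12 := hal 1 2 (by decide)
    have E10 := hal 1 0 (by decide)
    have E20 := hal 2 0 (by decide)
    have E21 := hal 2 1 (by decide)
    set A : Fin 3 → Fin 2 → ℂ := fun i l => (starRingEnd ℂ) (u i l) with hA
    have hAne : ∀ i l, A i l ≠ 0 := fun i l => by simp [hA, hu i l]
    have hP0 : A 0 0 * A 1 0 * A 2 0 * v 0 0 * v 1 0 * v 2 0 ≠ 0 := by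
      simp [hAne, hv]
    have I : (A 0 0 * A 1 0 * A 2 0 * v 0 0 * v 1 0 * v 2 0) *
        (h 0 1 0 * h 1 2 0 * h 2 0 0) =
      -((A 0 1 * A 1 1 * A 2 1 * v 0 1 * v 1 1 * v 2 1) *
        (h 0 1 1 * h 1 2 1 * h 2 0 1)) := by
      linear_combination
        (A 1 0 * h 1 2 0 * v 2 0 * A 2 0 * h 2 0 0 * v 0 0) * E01
        - (A 0 1 * h 0 1 1 * v 1 1 * A 2 0 * h 2 0 0 * v 0 0) * E12
        + (A 0 1 * h 0 1 1 * v 1 1 * A 1 1 * h 1 2 1 * v 2 1) * E20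
    have II : (A 0 0 * A 1 0 * A 2 0 * v 0 0 * v 1 0 * v 2 0) *
        (h 0 2 0 * h 1 0 0 * h 2 1 0) =
      -((A 0 1 * A 1 1 * A 2 1 * v 0 1 * v 1 1 * v 2 1) *
        (h 0 2 1 * h 1 0 1 * h 2 1 1)) := by
      linear_combination
        (A 1 0 * h 1 0 0 * v 0 0 * A 2 0 * h 2 1 0 * v 1 0) * E02
        - (A 0 1 * h 0 2 1 * v 2 1 * A 2 0 * h 2 1 0 * v 1 0) * E10
        + (A 0 1 * h 0 2 1 * v 2 1 * A 1 1 * h 1 0 1 * v 0 1) * E21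
    have key : (A 0 0 * A 1 0 * A 2 0 * v 0 0 * v 1 0 * v 2 0) *
        (h 0 1 1 * h 0 2 0 * h 1 2 1 * h 1 0 0 * h 2 0 1 * h 2 1 0) =
      (A 0 0 * A 1 0 * A 2 0 * v 0 0 * v 1 0 * v 2 0) *
        (h 0 1 0 * h 0 2 1 * h 1 2 0 * h 1 0 1 * h 2 0 0 * h 2 1 1) := by
      linear_combination (h 0 1 1 * h 1 2 1 * h 2 0 1) * II -
        (h 0 2 1 * h 1 0 1 * h 2 1 1) * I
    have hfinal := mul_left_cancel₀ hP0 key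
    field_simp
    linear_combination hfinal
  · intro hc
    field_simp at hc
    refine ⟨![![1, (starRingEnd ℂ) (-(h 0 1 0 * h 2 1 1 * h 2 0 0) / (h 0 1 1 * h 2 1 0 * h 2 0 1))],
              ![1, (starRingEnd ℂ) (-(h 1 0 0) / h 1 0 1)],
              ![1, (starRingEnd ℂ) (-(h 2 0 0) / h 2 0 1)]],
            ![![1, 1],
              ![1, (h 2 1 0 * h 2 0 1) / (h 2 1 1 * h 2 0 0)],
              ![1, (h 1 2 0 * h 1 0 1) / (h 1 2 1 * h 1 0 0)]], ?_, ?_, ?_⟩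
    · intro i l
      fin_cases i <;> fin_cases l <;>
        simp only [Matrix.cons_val_zero, Matrix.cons_val_one, Matrix.head_cons,
          Matrix.cons_val_two, Matrix.tail_cons, ne_eq, one_ne_zero, not_false_eq_true,
          map_ne_zero] <;>
        simp_all [Matrix.vecHead, Matrix.vecTail]
    · intro k l
      fin_cases k <;> fin_cases l <;>
        simp only [Matrix.cons_val_zero, Matrix.cons_val_one, Matrix.head_cons,
          Matrix.cons_val_two, Matrix.tail_cons, ne_eq, one_ne_zero, not_false_eq_true] <;>
        simp_all [Matrix.vecHead, Matrix.vecTail]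
    · intro i k hik
      fin_cases i <;> fin_cases k <;>
        simp only [Matrix.cons_val_zero, Matrix.cons_val_one, Matrix.head_cons,
          Matrix.cons_val_two, Matrix.tail_cons, map_one, Complex.conj_conj, one_mul, mul_one,
          map_div₀, map_neg, Fin.isValue,
          show ((⟨2, by norm_num⟩ : Fin 3) = 2) from rfl,
          show ((⟨1, by norm_num⟩ : Fin 3) = 1) from rfl,
          show ((⟨0, by norm_num⟩ : Fin 3) = 0) from rfl]
      any_goals exact absurd rfl hik
      all_goals field_simp
      any_goals ring
      all_goals linear_combination hc
end

section
/- Let τ_{i,k} ∈ ℝ for i, k ∈ {1,2,3}, let A_{i,k} > 0, let f1 ≠ f2 be real subcarrier frequencies, and set h_{i,k}^{(l)} = A_{i,k}·exp(−2π·i·f_l·τ_{i,k}) for l ∈ {1,2}. Then the three-user feasibility condition (h_{1,2}^{(2)}/h_{1,2}^{(1)})·(h_{1,3}^{(1)}/h_{1,3}^{(2)})·(h_{2,3}^{(2)}/h_{2,3}^{(1)})·(h_{2,1}^{(1)}/h_{2,1}^{(2)})·(h_{3,1}^{(2)}/h_{3,1}^{(1)})·(h_{3,2}^{(1)}/h_{3,2}^{(2)})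 = 1 holds if and only if (f2 − f1)·(τ_{1,3} − τ_{1,2} + τ_{2,1} − τ_{2,3} + τ_{3,2} − τ_{3,1}) is an integer (necessarily nonzero when τ_{1,3} − τ_{1,2} + τ_{2,1} − τ_{2,3} + τ_{3,2} − τ_{3,1} ≠ 0). -/
open Real Complex

/-- For line-of-sight channels
`h_{i,k}^{(l)} = A_{i,k}·exp(−2π·i·f_l·τ_{i,k})` with positive amplitudes and
`f1 ≠ f2`, the three-user feasibility condition (product of cross-channel
ratios equal to 1) holds if and only if
`(f2 − f1)·(τ_{1,3} − τ_{1,2} + τ_{2,1} − τ_{2,3} + τ_{3,2} − τ_{3,1})` is an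
integer; this number is necessarily nonzero when the delay combination is
nonzero. (Users are indexed by `0, 1, 2` and subcarriers by `0, 1`.) -/
theorem los_feasibility_iff_integer
    (τ : Fin 3 → Fin 3 → ℝ) (A : Fin 3 → Fin 3 → ℝ) (hA : ∀ i k, 0 < A i k)
    (f1 f2 : ℝ) (hf : f1 ≠ f2)
    (h : Fin 3 → Fin 3 → Fin 2 → ℂ)
    (hdef : ∀ i k l, h i k l = (A i k : ℂ) *
      Complex.exp (-(2 * (Real.pi : ℂ) * Complex.I) *
        (if l = 0 then (f1 : ℂ) else (f2 : ℂ)) * (τ i k : ℂ))) :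
    ((h 0 1 1 / h 0 1 0) * (h 0 2 0 / h 0 2 1) *
        (h 1 2 1 / h 1 2 0) * (h 1 0 0 / h 1 0 1) *
        (h 2 0 1 / h 2 0 0) * (h 2 1 0 / h 2 1 1) = 1 ↔
      ∃ n : ℤ, (f2 - f1) * (τ 0 2 - τ 0 1 + τ 1 0 - τ 1 2 + τ 2 1 - τ 2 0) = n) ∧
    (τ 0 2 - τ 0 1 + τ 1 0 - τ 1 2 + τ 2 1 - τ 2 0 ≠ 0 →
      (f2 - f1) * (τ 0 2 - τ 0 1 + τ 1 0 - τ 1 2 + τ 2 1 - τ 2 0) ≠ 0) := by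
  have hratio : ∀ (i k : Fin 3) (g1 g2 : ℝ) (l1 l2 : Fin 2),
      ((if l1 = 0 then (f1:ℂ) else f2) = g1) → ((if l2 = 0 then (f1:ℂ) else f2) = g2) →
      h i k l1 / h i k l2 = Complex.exp
        (-(2 * (Real.pi : ℂ) * Complex.I) * ((g1 : ℂ) - g2) * (τ i k : ℂ)) := by
    intro i k g1 g2 l1 l2 h1 h2
    have hAne : (A i k : ℂ) ≠ 0 := by exact_mod_cast ne_of_gt (hA i k)
    rw [hdef i k l1, hdef i k l2, h1, h2, mul_div_mul_left _ _ hAne, ← Complex.exp_sub]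
    ring_nf
  have e1 := hratio 0 1 f2 f1 1 0 (by norm_num) (by norm_num)
  have e2 := hratio 0 2 f1 f2 0 1 (by norm_num) (by norm_num)
  have e3 := hratio 1 2 f2 f1 1 0 (by norm_num) (by norm_num)
  have e4 := hratio 1 0 f1 f2 0 1 (by norm_num) (by norm_num)
  have e5 := hratio 2 0 f2 f1 1 0 (by norm_num) (by norm_num)
  have e6 := hratio 2 1 f1 f2 0 1 (by norm_num) (by norm_num)
  constructor
  · rw [e1, e2, e3, e4, e5, e6, ← Complex.exp_add, ← Complex.exp_add,
      ← Complex.exp_add, ← Complex.exp_add, ← Complex.exp_add]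
    have hsum : -(2 * (Real.pi : ℂ) * Complex.I) * ((f2:ℂ) - f1) * (τ 0 1 : ℂ) +
        -(2 * (Real.pi : ℂ) * Complex.I) * ((f1:ℂ) - f2) * (τ 0 2 : ℂ) +
        -(2 * (Real.pi : ℂ) * Complex.I) * ((f2:ℂ) - f1) * (τ 1 2 : ℂ) +
        -(2 * (Real.pi : ℂ) * Complex.I) * ((f1:ℂ) - f2) * (τ 1 0 : ℂ) +
        -(2 * (Real.pi : ℂ) * Complex.I) * ((f2:ℂ) - f1) * (τ 2 0 : ℂ) +
        -(2 * (Real.pi : ℂ) * Complex.I) * ((f1:ℂ) - f2) * (τ 2 1 : ℂ) =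
        (((f2 - f1) * (τ 0 2 - τ 0 1 + τ 1 0 - τ 1 2 + τ 2 1 - τ 2 0) : ℝ) : ℂ) *
          (2 * (Real.pi : ℂ) * Complex.I) := by
      push_cast; ring
    rw [hsum, Complex.exp_eq_one_iff]
    constructor
    · rintro ⟨n, hn⟩
      refine ⟨n, ?_⟩
      have h2pi : (2 * (Real.pi : ℂ) * Complex.I) ≠ 0 := by
        simp [Real.pi_ne_zero, Complex.I_ne_zero]
      have := mul_right_cancel₀ h2pi hn
      exact_mod_cast this
    · rintro ⟨n, hn⟩
      exact ⟨n, by rw [hn]; push_cast; ring⟩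
  · intro hS
    exact mul_ne_zero (sub_ne_zero.mpr (Ne.symm hf)) hS
end

section
/- Fix delays τ_{i,k} ∈ ℝ for i, k ∈ {1,2,3} with Σ := τ_{1,3} − τ_{1,2} + τ_{2,1} − τ_{2,3} + τ_{3,2} − τ_{3,1} ≠ 0, amplitudes A_{i,k} > 0, a nonzero integer n, subcarrier spacing Δf = n/Σ, and frequencies f^{(1)}, f^{(2)} = f^{(1)} + Δf, and set h_{i,k}^{(l)} = A_{i,k}·exp(−2π·i·f^{(l)}·τ_{i,k}). Then there exist vectors u_1, u_2, u_3, v_1, v_2, v_3 ∈ ℂ², each component of modulus 1/√2, satisfying the six alignment equations u_i† H_{i,k} v_k = 0 for all i ≠ k, such that the effective direct-channel amplitudes are |u_1† H_{1,1} v_1| = A_{1,1}·|sin(π·Δf·Δτ_1)|, |u_2† H_{2,2} v_2| = A_{2,2}·|sin(π·Δf·Δτ_2)|, and |u_3† H_{3,3} v_3| = A_{3,3}·|sin(π·Δf·Δτ_3)|, where Δτ_1 = −τ_{1,1} + τ_{2,1} − τ_{2,3} + τ_{1,3}, Δτ_2 = −τ_{2,2} + τ_{2,3} − τ_{1,3}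 + τ_{1,2}, and Δτ_3 = −τ_{3,3} + τ_{3,2} − τ_{1,2} + τ_{1,3}. -/
noncomputable def expI (x : ℝ) : ℂ := Complex.exp (Complex.I * x)

lemma expI_zero : expI 0 = 1 := by simp [expI]

lemma expI_add (a b : ℝ) : expI a * expI b = expI (a + b) := by
  rw [expI, expI, expI, ← Complex.exp_add]; push_cast; ring_nf

lemma expI_abs (x : ℝ) : ‖expI x‖ = 1 := by
  simp [expI, Complex.norm_exp]

lemma expI_conj (x : ℝ) : (starRingEnd ℂ) (expI x) = expI (-x) := by
  simp [expI, ← Complex.exp_conj, map_mul, Complex.conj_ofReal]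

lemma expI_pi : expI Real.pi = -1 := by
  simpa [expI, mul_comm] using Complex.exp_pi_mul_I

lemma expI_int (n : ℤ) : expI (2 * Real.pi * n) = 1 := by
  have := Complex.exp_int_mul_two_pi_mul_I n
  rw [expI]; convert this using 2; push_cast; ring

lemma abs_one_sub_expI (x : ℝ) : ‖1 - expI x‖ = 2 * |Real.sin (x/2)| := by
  rw [expI, show (Complex.I * x) = (x:ℂ) * Complex.I by ring, Complex.exp_mul_I]
  rw [Complex.norm_def, Complex.normSq_apply]
  simp only [Complex.sub_re, Complex.sub_im, Complex.one_re, Complex.one_im,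
    Complex.add_re, Complex.add_im, Complex.mul_re, Complex.mul_im,
    Complex.cos_ofReal_re, Complex.cos_ofReal_im, Complex.sin_ofReal_re,
    Complex.sin_ofReal_im, Complex.I_re, Complex.I_im]
  have hc : Real.cos x = 2 * Real.cos (x/2)^2 - 1 := by
    have := Real.cos_two_mul (x/2); rw [show 2*(x/2) = x by ring] at this; linarith
  have hp := Real.sin_sq_add_cos_sq (x/2)
  have h1 : (1 - (Real.cos x + (Real.sin x * 0 - 0 * 1))) * (1 - (Real.cos x + (Real.sin x * 0 - 0 * 1))) +
      (0 - (0 + (Real.sin x * 1 + 0 * 0))) * (0 - (0 + (Real.sin x * 1 + 0 * 0))) =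
      (2 * |Real.sin (x/2)|)^2 := by
    rw [mul_pow, sq_abs]
    nlinarith [Real.sin_sq_add_cos_sq x]
  rw [h1]
  exact Real.sqrt_sq (by positivity)

lemma exp_eq_expI (g t : ℝ) :
    Complex.exp (-(2 * (Real.pi : ℂ) * Complex.I) * (g : ℂ) * (t : ℂ)) =
      expI (-(2 * Real.pi * g * t)) := by
  rw [expI]; congr 1; push_cast; ring

lemma term_sum (Av f1 f2 t ψ φ : ℝ) :
    (starRingEnd ℂ) (((Real.sqrt 2)⁻¹ : ℝ) * expI 0) *
        ((Av : ℂ) * Complex.exp (-(2 * (Real.pi : ℂ) * Complex.I) * (f1 : ℂ) * (t : ℂ))) *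
        (((Real.sqrt 2)⁻¹ : ℝ) * expI 0) +
      (starRingEnd ℂ) (((Real.sqrt 2)⁻¹ : ℝ) * expI ψ) *
        ((Av : ℂ) * Complex.exp (-(2 * (Real.pi : ℂ) * Complex.I) * (f2 : ℂ) * (t : ℂ))) *
        (((Real.sqrt 2)⁻¹ : ℝ) * expI φ) =
      ((Av / 2 : ℝ) : ℂ) * expI (-(2 * Real.pi * f1 * t)) *
        (1 + expI (φ - ψ - 2 * Real.pi * (f2 - f1) * t)) := by
  have hc : (((Real.sqrt 2)⁻¹ : ℝ) : ℂ) * (((Real.sqrt 2)⁻¹ : ℝ) : ℂ) = 1 / 2 := by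
    have h2 : Real.sqrt 2 * Real.sqrt 2 = 2 := Real.mul_self_sqrt (by norm_num)
    have h2' : (Real.sqrt 2)⁻¹ * (Real.sqrt 2)⁻¹ = 1 / 2 := by
      field_simp
      rw [Real.sq_sqrt (by norm_num)]
    rw [← Complex.ofReal_mul, h2']; norm_num
  have e1 : expI (-ψ) * expI (-(2 * Real.pi * f2 * t)) * expI φ =
      expI (-(2 * Real.pi * f1 * t)) * expI (φ - ψ - 2 * Real.pi * (f2 - f1) * t) := by
    rw [expI_add, expI_add, expI_add]; congr 1; ring
  simp only [exp_eq_expI, map_mul, expI_conj, Complex.conj_ofReal, neg_zero, expI_zero,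
    map_one]
  push_cast at hc ⊢
  linear_combination ((Av:ℂ) * (expI (-(2 * Real.pi * f1 * t)) +
      expI (-ψ) * expI (-(2 * Real.pi * f2 * t)) * expI φ)) * hc + ((Av:ℂ)/2) * e1

lemma expI_pi_shift (x : ℝ) (m : ℤ) : expI (Real.pi + x + 2 * Real.pi * m) = - expI x := by
  rw [show Real.pi + x + 2 * Real.pi * m = Real.pi + x + 2 * Real.pi * m by ring,
    ← expI_add, ← expI_add, expI_pi, expI_int]
  ring

lemma align_zero (Av f1 f2 t ψ φ : ℝ) (m : ℤ)
    (hθ : φ - ψ - 2 * Real.pi * (f2 - f1) * t = Real.pi + 0 + 2 * Real.pi * m) :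
    (starRingEnd ℂ) (((Real.sqrt 2)⁻¹ : ℝ) * expI 0) *
        ((Av : ℂ) * Complex.exp (-(2 * (Real.pi : ℂ) * Complex.I) * (f1 : ℂ) * (t : ℂ))) *
        (((Real.sqrt 2)⁻¹ : ℝ) * expI 0) +
      (starRingEnd ℂ) (((Real.sqrt 2)⁻¹ : ℝ) * expI ψ) *
        ((Av : ℂ) * Complex.exp (-(2 * (Real.pi : ℂ) * Complex.I) * (f2 : ℂ) * (t : ℂ))) *
        (((Real.sqrt 2)⁻¹ : ℝ) * expI φ) = 0 := by
  rw [term_sum, hθ, expI_pi_shift, expI_zero]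
  ring

lemma amp_eq (Av f1 f2 t ψ φ x : ℝ) (m : ℤ) (hAv : 0 ≤ Av)
    (hθ : φ - ψ - 2 * Real.pi * (f2 - f1) * t = Real.pi + x + 2 * Real.pi * m) :
    ‖((starRingEnd ℂ) (((Real.sqrt 2)⁻¹ : ℝ) * expI 0) *
        ((Av : ℂ) * Complex.exp (-(2 * (Real.pi : ℂ) * Complex.I) * (f1 : ℂ) * (t : ℂ))) *
        (((Real.sqrt 2)⁻¹ : ℝ) * expI 0) +
      (starRingEnd ℂ) (((Real.sqrt 2)⁻¹ : ℝ) * expI ψ) *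
        ((Av : ℂ) * Complex.exp (-(2 * (Real.pi : ℂ) * Complex.I) * (f2 : ℂ) * (t : ℂ))) *
        (((Real.sqrt 2)⁻¹ : ℝ) * expI φ))‖ = Av * |Real.sin (x / 2)| := by
  rw [term_sum, hθ, expI_pi_shift]
  rw [show (((Av/2 : ℝ)) : ℂ) * expI (-(2 * Real.pi * f1 * t)) * (1 + -expI x)
      = ((Av/2 : ℝ) : ℂ) * expI (-(2 * Real.pi * f1 * t)) * (1 - expI x) by ring]
  rw [norm_mul, norm_mul, expI_abs, abs_one_sub_expI, Complex.norm_real, Real.norm_eq_abs]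
  rw [abs_of_nonneg (by linarith)]
  ring

lemma c_abs (x : ℝ) : ‖(((Real.sqrt 2)⁻¹ : ℝ) : ℂ) * expI x‖ = 1 / Real.sqrt 2 := by
  rw [norm_mul, expI_abs, Complex.norm_real, Real.norm_eq_abs, mul_one,
    abs_of_nonneg (inv_nonneg.mpr (Real.sqrt_nonneg 2)), one_div]


/-- For line-of-sight channels with delays `τ_{i,k}`, amplitudes
`A_{i,k} > 0`, delay combination `S ≠ 0`, subcarrier spacing `Δf = n/S` for a
nonzero integer `n`, and frequencies `f1`, `f2 = f1 + Δf`, there exist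
precoders and receive filters whose components all have modulus `1/√2`,
satisfying the six alignment equations, whose effective direct-channel
amplitudes are `A_{i,i}·|sin(π·Δf·Δτ_i)|`.
(Users are indexed by `0, 1, 2` and subcarriers by `0, 1`.) -/
theorem los_effective_amplitudes
    (τ : Fin 3 → Fin 3 → ℝ) (A : Fin 3 → Fin 3 → ℝ) (hA : ∀ i k, 0 < A i k)
    (S : ℝ) (hS : S = τ 0 2 - τ 0 1 + τ 1 0 - τ 1 2 + τ 2 1 - τ 2 0) (hS0 : S ≠ 0)
    (n : ℤ) (hn : n ≠ 0) (Δf f1 f2 : ℝ) (hΔf : Δf = n / S) (hf2 : f2 = f1 + Δf)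
    (h : Fin 3 → Fin 3 → Fin 2 → ℂ)
    (hdef : ∀ i k l, h i k l = (A i k : ℂ) *
      Complex.exp (-(2 * (Real.pi : ℂ) * Complex.I) *
        (if l = 0 then (f1 : ℂ) else (f2 : ℂ)) * (τ i k : ℂ))) :
    ∃ u v : Fin 3 → Fin 2 → ℂ,
      (∀ i l, ‖u i l‖ = 1 / Real.sqrt 2) ∧
      (∀ k l, ‖v k l‖ = 1 / Real.sqrt 2) ∧
      (∀ i k, i ≠ k →
        (starRingEnd ℂ) (u i 0) * h i k 0 * v k 0 +
          (starRingEnd ℂ) (u i 1) * h i k 1 * v k 1 = 0) ∧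
      ‖((starRingEnd ℂ) (u 0 0) * h 0 0 0 * v 0 0 +
          (starRingEnd ℂ) (u 0 1) * h 0 0 1 * v 0 1)‖ =
        A 0 0 * |Real.sin (Real.pi * Δf * (-τ 0 0 + τ 1 0 - τ 1 2 + τ 0 2))| ∧
      ‖((starRingEnd ℂ) (u 1 0) * h 1 1 0 * v 1 0 +
          (starRingEnd ℂ) (u 1 1) * h 1 1 1 * v 1 1)‖ =
        A 1 1 * |Real.sin (Real.pi * Δf * (-τ 1 1 + τ 1 2 - τ 0 2 + τ 0 1))| ∧
      ‖((starRingEnd ℂ) (u 2 0) * h 2 2 0 * v 2 0 +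
          (starRingEnd ℂ) (u 2 1) * h 2 2 1 * v 2 1)‖ =
        A 2 2 * |Real.sin (Real.pi * Δf * (-τ 2 2 + τ 2 1 - τ 0 1 + τ 0 2))| := by
  subst hf2
  have hDS : Δf * S = n := by rw [hΔf]; field_simp
  have haS : 2 * Real.pi * Δf * S = 2 * Real.pi * n := by linear_combination 2 * Real.pi * hDS
  set a := 2 * Real.pi * Δf with ha
  set Ψ : Fin 3 → ℝ := ![0, a * (τ 0 2 - τ 1 2), a * (τ 1 0 + τ 0 2 - τ 1 2 - τ 2 0)] with hΨ
  set Φ : Fin 3 → ℝ := ![Real.pi + a * (τ 1 0 + τ 0 2 - τ 1 2),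
    Real.pi + a * τ 0 1, Real.pi + a * τ 0 2] with hΦ
  have h10 : ((1:Fin 2) = 0) = False := by simp
  have mv : ∀ x y z : ℝ, (![x, y, z] 0 = x ∧ ![x, y, z] 1 = y ∧ ![x, y, z] 2 = z) :=
    fun x y z => ⟨rfl, rfl, rfl⟩
  refine ⟨fun i l => (((Real.sqrt 2)⁻¹ : ℝ) : ℂ) * expI (if l = 0 then 0 else Ψ i),
         fun k l => (((Real.sqrt 2)⁻¹ : ℝ) : ℂ) * expI (if l = 0 then 0 else Φ k),
         fun i l => c_abs _, fun k l => c_abs _, ?_, ?_, ?_, ?_⟩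
  · intro i k hik
    simp only [hdef, reduceIte, h10, if_false]
    fin_cases i <;> fin_cases k <;>
      simp only [Fin.mk_zero, Fin.mk_one, show (⟨2, by omega⟩ : Fin 3) = (2 : Fin 3) from rfl]
    · exact absurd rfl hik
    · exact align_zero _ f1 _ _ _ _ 0 (by
        simp only [hΨ, hΦ, Fin.isValue, (mv _ _ _).1, (mv _ _ _).2.1, (mv _ _ _).2.2]
        push_cast; ring)
    · exact align_zero _ f1 _ _ _ _ 0 (by
        simp only [hΨ, hΦ, Fin.isValue, (mv _ _ _).1, (mv _ _ _).2.1, (mv _ _ _).2.2]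
        push_cast; ring)
    · exact align_zero _ f1 _ _ _ _ 0 (by
        simp only [hΨ, hΦ, Fin.isValue, (mv _ _ _).1, (mv _ _ _).2.1, (mv _ _ _).2.2]
        push_cast; ring)
    · exact absurd rfl hik
    · exact align_zero _ f1 _ _ _ _ 0 (by
        simp only [hΨ, hΦ, Fin.isValue, (mv _ _ _).1, (mv _ _ _).2.1, (mv _ _ _).2.2]
        push_cast; ring)
    · exact align_zero _ f1 _ _ _ _ 0 (by
        simp only [hΨ, hΦ, Fin.isValue, (mv _ _ _).1, (mv _ _ _).2.1, (mv _ _ _).2.2]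
        push_cast; ring)
    · exact align_zero _ f1 _ _ _ _ (-n) (by
        simp only [hΨ, hΦ, Fin.isValue, (mv _ _ _).1, (mv _ _ _).2.1, (mv _ _ _).2.2]
        push_cast; linear_combination (-1) * haS + a * hS)
    · exact absurd rfl hik
  · simp only [hdef, reduceIte, h10, if_false]
    rw [amp_eq (A 0 0) f1 (f1 + Δf) (τ 0 0) (Ψ 0) (Φ 0)
        (a * (-τ 0 0 + τ 1 0 - τ 1 2 + τ 0 2)) 0 (hA 0 0).le
        (by simp only [hΨ, hΦ, Fin.isValue, (mv _ _ _).1, (mv _ _ _).2.1, (mv _ _ _).2.2]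
            push_cast; ring)]
    rw [show a * (-τ 0 0 + τ 1 0 - τ 1 2 + τ 0 2) / 2
        = Real.pi * Δf * (-τ 0 0 + τ 1 0 - τ 1 2 + τ 0 2) by rw [ha]; ring]
  · simp only [hdef, reduceIte, h10, if_false]
    rw [amp_eq (A 1 1) f1 (f1 + Δf) (τ 1 1) (Ψ 1) (Φ 1)
        (a * (-τ 1 1 + τ 1 2 - τ 0 2 + τ 0 1)) 0 (hA 1 1).le
        (by simp only [hΨ, hΦ, Fin.isValue, (mv _ _ _).1, (mv _ _ _).2.1, (mv _ _ _).2.2]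
            push_cast; ring)]
    rw [show a * (-τ 1 1 + τ 1 2 - τ 0 2 + τ 0 1) / 2
        = Real.pi * Δf * (-τ 1 1 + τ 1 2 - τ 0 2 + τ 0 1) by rw [ha]; ring]
  · simp only [hdef, reduceIte, h10, if_false]
    rw [amp_eq (A 2 2) f1 (f1 + Δf) (τ 2 2) (Ψ 2) (Φ 2)
        (a * (-τ 2 2 + τ 2 1 - τ 0 1 + τ 0 2)) (-n) (hA 2 2).le
        (by simp only [hΨ, hΦ, Fin.isValue, (mv _ _ _).1, (mv _ _ _).2.1, (mv _ _ _).2.2]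
            push_cast; linear_combination (-1) * haS + a * hS)]
    rw [show a * (-τ 2 2 + τ 2 1 - τ 0 1 + τ 0 2) / 2
        = Real.pi * Δf * (-τ 2 2 + τ 2 1 - τ 0 1 + τ 0 2) by rw [ha]; ring]
end

section
/- Fix delays τ_{i,k} ∈ ℝ for i, k ∈ {1,2,3}, amplitudes A_{i,k} > 0, frequencies f^{(1)} ≠ f^{(2)} with spacing Δf = f^{(2)} − f^{(1)}, and channels h_{i,k}^{(l)} = A_{i,k}·exp(−2π·i·f^{(l)}·τ_{i,k}). Suppose nonzero complex numbers a_1, a_2, a_3, b_1, b_2, b_3 are such that the constant vectors u_i = (a_i, a_i) and v_k = (b_k, b_k) satisfy the alignment equations u_i† H_{i,k} v_k = 0 for all i ≠ k. Then for every pair i ≠ k one has exp(−2π·i·Δf·τ_{i,k}) = −1; equivalently 2·Δf·τ_{i,k} is an odd integer, i.e., Δf = (1 + 2·n_{i,k})/(2·τ_{i,k}) for some integer n_{i,k} whenever τ_{i,k} ≠ 0. -/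
/-- For line-of-sight channels
`h_{i,k}^{(l)} = A_{i,k}·exp(−2π·i·f^{(l)}·τ_{i,k})` with `f1 ≠ f2` and
`Δf = f2 − f1`, if nonzero complex numbers `a_i, b_k` are such that the
constant vectors `u_i = (a_i, a_i)` and `v_k = (b_k, b_k)` (time-based IA)
satisfy the alignment equations for all `i ≠ k`, then for every `i ≠ k` one
has `exp(−2π·i·Δf·τ_{i,k}) = −1`; equivalently `2·Δf·τ_{i,k}` is an odd
integer, i.e. `Δf = (1 + 2n_{i,k})/(2τ_{i,k})` for some integer `n_{i,k}`
whenever `τ_{i,k} ≠ 0`. (Users indexed by `0, 1, 2`, subcarriers by `0, 1`.) -/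
theorem time_based_IA_spacing
    (τ : Fin 3 → Fin 3 → ℝ) (A : Fin 3 → Fin 3 → ℝ) (hA : ∀ i k, 0 < A i k)
    (f1 f2 : ℝ) (hf : f1 ≠ f2) (Δf : ℝ) (hΔf : Δf = f2 - f1)
    (h : Fin 3 → Fin 3 → Fin 2 → ℂ)
    (hdef : ∀ i k l, h i k l = (A i k : ℂ) *
      Complex.exp (-(2 * (Real.pi : ℂ) * Complex.I) *
        (if l = 0 then (f1 : ℂ) else (f2 : ℂ)) * (τ i k : ℂ)))
    (a b : Fin 3 → ℂ) (ha : ∀ i, a i ≠ 0) (hb : ∀ k, b k ≠ 0)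
    (halign : ∀ i k, i ≠ k →
      (starRingEnd ℂ) (a i) * h i k 0 * b k +
        (starRingEnd ℂ) (a i) * h i k 1 * b k = 0) :
    ∀ i k, i ≠ k →
      Complex.exp (-(2 * (Real.pi : ℂ) * Complex.I) * (Δf : ℂ) * (τ i k : ℂ)) = -1 ∧
      (∃ m : ℤ, 2 * Δf * τ i k = 2 * m + 1) ∧
      (τ i k ≠ 0 → ∃ m : ℤ, Δf = (1 + 2 * m) / (2 * τ i k)) := by
  intro i k hik
  have ha' : (starRingEnd ℂ) (a i) ≠ 0 := by
    simpa using (ha i)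
  have hA' : (A i k : ℂ) ≠ 0 := by
    exact_mod_cast (hA i k).ne'
  -- sum of the two channel coefficients vanishes
  have hsum : h i k 0 + h i k 1 = 0 := by
    have := halign i k hik
    have h2 : (starRingEnd ℂ) (a i) * (h i k 0 + h i k 1) * b k = 0 := by
      linear_combination this
    rcases mul_eq_zero.1 h2 with h3 | h3
    · rcases mul_eq_zero.1 h3 with h4 | h4
      · exact absurd h4 ha'
      · exact h4
    · exact absurd h3 (hb k)
  have e0 : h i k 0 = (A i k : ℂ) *
      Complex.exp (-(2 * (Real.pi : ℂ) * Complex.I) * (f1 : ℂ) * (τ i k : ℂ)) := by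
    simpa using hdef i k 0
  have e1' : h i k 1 = (A i k : ℂ) *
      Complex.exp (-(2 * (Real.pi : ℂ) * Complex.I) * (f2 : ℂ) * (τ i k : ℂ)) := by
    simpa using hdef i k 1
  set z1 : ℂ := -(2 * (Real.pi : ℂ) * Complex.I) * (f1 : ℂ) * (τ i k : ℂ)
  set z2 : ℂ := -(2 * (Real.pi : ℂ) * Complex.I) * (f2 : ℂ) * (τ i k : ℂ)
  have hexp : Complex.exp z2 = -Complex.exp z1 := by
    have : (A i k : ℂ) * (Complex.exp z1 + Complex.exp z2) = 0 := by
      rw [mul_add, ← e0, ← e1']; exact hsum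
    have h5 := (mul_eq_zero.1 this).resolve_left hA'
    linear_combination h5
  have key : Complex.exp (-(2 * (Real.pi : ℂ) * Complex.I) * (Δf : ℂ) * (τ i k : ℂ)) = -1 := by
    have hz : -(2 * (Real.pi : ℂ) * Complex.I) * (Δf : ℂ) * (τ i k : ℂ) = z2 - z1 := by
      rw [hΔf]; push_cast; ring
    rw [hz, Complex.exp_sub, hexp, neg_div,
      div_self (Complex.exp_ne_zero z1)]
  refine ⟨key, ?_, ?_⟩
  · -- extract the integer from exp = -1
    have h1 : Complex.exp (-(2 * (Real.pi : ℂ) * Complex.I) * (Δf : ℂ) * (τ i k : ℂ)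
        + Real.pi * Complex.I) = 1 := by
      rw [Complex.exp_add, key, Complex.exp_pi_mul_I]; ring
    obtain ⟨n, hn⟩ := Complex.exp_eq_one_iff.1 h1
    have h2 : ((-(2 * Real.pi * Δf * τ i k) + Real.pi : ℝ) : ℂ) * Complex.I =
        (((n : ℝ) * (2 * Real.pi) : ℝ) : ℂ) * Complex.I := by
      push_cast
      linear_combination hn
    have h3 : -(2 * Real.pi * Δf * τ i k) + Real.pi = (n : ℝ) * (2 * Real.pi) := by
      exact_mod_cast mul_right_cancel₀ Complex.I_ne_zero h2
    refine ⟨-n, ?_⟩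
    have hπ := Real.pi_ne_zero
    have h4 : Real.pi * (2 * Δf * τ i k) = Real.pi * (2 * (-n : ℝ) + 1) := by
      push_cast
      linarith [h3]
    have := mul_left_cancel₀ hπ h4
    push_cast at this ⊢
    linarith
  · intro hτ
    -- reuse the integer from the previous part (recompute)
    have h1 : Complex.exp (-(2 * (Real.pi : ℂ) * Complex.I) * (Δf : ℂ) * (τ i k : ℂ)
        + Real.pi * Complex.I) = 1 := by
      rw [Complex.exp_add, key, Complex.exp_pi_mul_I]; ring
    obtain ⟨n, hn⟩ := Complex.exp_eq_one_iff.1 h1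
    have h2 : ((-(2 * Real.pi * Δf * τ i k) + Real.pi : ℝ) : ℂ) * Complex.I =
        (((n : ℝ) * (2 * Real.pi) : ℝ) : ℂ) * Complex.I := by
      push_cast
      linear_combination hn
    have h3 : -(2 * Real.pi * Δf * τ i k) + Real.pi = (n : ℝ) * (2 * Real.pi) := by
      exact_mod_cast mul_right_cancel₀ Complex.I_ne_zero h2
    refine ⟨-n, ?_⟩
    have hπ := Real.pi_ne_zero
    have h4 : Real.pi * (2 * Δf * τ i k) = Real.pi * (2 * (-n : ℝ) + 1) := by
      push_cast; linarith [h3]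
    have h5 := mul_left_cancel₀ hπ h4
    field_simp
    push_cast at h5 ⊢
    linarith
end

section
/- Let (Ω, 𝔽, P) be a probability space and for each i ∈ {1,2,3} let (D_{i,l})_{l≥1} be random digits taking values in {0,1,...,9}, such that the entire family {D_{i,l} : i ∈ {1,2,3}, l ≥ 1} is mutually independent and each D_{i,l} is uniformly distributed on {0,...,9}. Define λ_i = Σ_{l≥1} D_{i,l}·10^{−l}. Then almost surely: for every ε > 0 there exists r ∈ ℕ such that |fract(10^r·λ_i) − 1/2| < ε simultaneously for all i ∈ {1,2,3}. -/
open MeasureTheory ProbabilityTheory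


lemma pow_eq (l : ℕ) : (10:ℝ)^(-(l:ℤ)-1) = (1/10:ℝ)^(l+1) := by
  rw [one_div, ← zpow_natCast ((10:ℝ)⁻¹) (l+1), inv_zpow, ← zpow_neg]
  congr 1
  push_cast
  ring

lemma digits_summable (d : ℕ → ℕ) (hd : ∀ l, d l ≤ 9) :
    Summable (fun l : ℕ => (d l : ℝ) * (1/10:ℝ)^(l+1)) := by
  apply Summable.of_nonneg_of_le (fun l => by positivity) (fun l => ?_)
    ((summable_geometric_of_lt_one (by norm_num) (by norm_num : (1/10:ℝ) < 1)).mul_left 9)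
  have h1 : (d l : ℝ) ≤ 9 := by exact_mod_cast hd l
  have h2 : (1/10:ℝ)^(l+1) ≤ (1/10:ℝ)^l := by
    apply pow_le_pow_of_le_one (by norm_num) (by norm_num); omega
  nlinarith [pow_nonneg (by norm_num : (0:ℝ) ≤ 1/10) l, pow_nonneg (by norm_num : (0:ℝ) ≤ 1/10) (l+1)]

lemma fract_bound (d : ℕ → ℕ) (hd : ∀ l, d l ≤ 9) (r k : ℕ)
    (h5 : d r = 5) (h0 : ∀ j, 1 ≤ j → j ≤ k → d (r + j) = 0) :
    |Int.fract ((10:ℝ)^r * ∑' l : ℕ, (d l : ℝ) * (10:ℝ)^(-(l:ℤ)-1)) - 1/2| ≤ (1/10:ℝ)^(k+1) := by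
  have hsum := digits_summable d hd
  have hrw : (fun l : ℕ => (d l : ℝ) * (10:ℝ)^(-(l:ℤ)-1)) = fun l : ℕ => (d l : ℝ) * (1/10:ℝ)^(l+1) := by
    funext l; rw [pow_eq]
  rw [hrw, ← tsum_mul_left]
  have hsum2 : Summable (fun l : ℕ => (10:ℝ)^r * ((d l : ℝ) * (1/10:ℝ)^(l+1))) := hsum.mul_left _
  rw [← Summable.sum_add_tsum_nat_add r hsum2]
  have hN : (∑ i ∈ Finset.range r, (10:ℝ)^r * ((d i : ℝ) * (1/10:ℝ)^(i+1)))
      = ((∑ i ∈ Finset.range r, d i * 10^(r-i-1) : ℕ) : ℝ) := by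
    push_cast
    apply Finset.sum_congr rfl
    intro i hi
    rw [Finset.mem_range] at hi
    have h1 : (1/10:ℝ)^(i+1) = ((10:ℝ)^(i+1))⁻¹ := by rw [one_div, inv_pow]
    rw [h1]
    have h3 : (r - i - 1) + (i+1) = r := by omega
    field_simp
    rw [mul_assoc, ← pow_add, add_comm (i+1) (r-i-1), h3]
    ring
  rw [hN, Int.fract_natCast_add]
  set T := ∑' (i : ℕ), (10:ℝ)^r * ((d (i + r) : ℝ) * (1/10:ℝ)^(i + r + 1)) with hT
  have hTrw : T = ∑' j : ℕ, (d (r + j) : ℝ) * (1/10:ℝ)^(j+1) := by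
    apply tsum_congr
    intro j
    rw [add_comm j r]
    have h1 : (1/10:ℝ)^(r + j + 1) = (1/10:ℝ)^r * (1/10:ℝ)^(j+1) := by
      rw [← pow_add]; congr 1
    have h10 : (10:ℝ)^r * (1/10:ℝ)^r = 1 := by
      rw [one_div, inv_pow, mul_inv_cancel₀ (by positivity)]
    calc (10:ℝ)^r * ((d (r + j) : ℝ) * (1/10:ℝ)^(r + j + 1))
        = ((10:ℝ)^r * (1/10:ℝ)^r) * ((d (r + j) : ℝ) * (1/10:ℝ)^(j+1)) := by rw [h1]; ring
      _ = (d (r + j) : ℝ) * (1/10:ℝ)^(j+1) := by rw [h10, one_mul]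
  have hsum3 : Summable (fun j : ℕ => (d (r + j) : ℝ) * (1/10:ℝ)^(j+1)) :=
    digits_summable (fun j => d (r + j)) (fun j => hd _)
  have hlow : (1/2:ℝ) ≤ T := by
    rw [hTrw]
    have h := Summable.le_tsum hsum3 0 (fun j _ => by positivity)
    have he : ((d (r+0):ℕ) : ℝ) * (1/10:ℝ)^(0+1) = 1/2 := by norm_num [h5]
    rw [he] at h
    exact h
  have hup : T ≤ 1/2 + (1/10:ℝ)^(k+1) := by
    rw [hTrw, ← Summable.sum_add_tsum_nat_add (k+1) hsum3]
    have h1 : (∑ j ∈ Finset.range (k+1), (d (r + j) : ℝ) * (1/10:ℝ)^(j+1)) = 1/2 := by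
      rw [Finset.sum_eq_single 0]
      · norm_num [h5]
      · intro j hj hj0
        rw [Finset.mem_range] at hj
        rw [h0 j (by omega) (by omega)]
        simp
      · simp
    rw [h1]
    gcongr
    have hgeo : Summable (fun j : ℕ => (9:ℝ) * (1/10:ℝ)^(j + k + 2)) := by
      have h := ((summable_geometric_of_lt_one (by norm_num) (by norm_num : (1/10:ℝ) < 1)).mul_left
        ((9:ℝ) * (1/10:ℝ)^(k+2)))
      apply h.congr
      intro j
      rw [show j + k + 2 = (k+2) + j from by omega, pow_add]
      ring
    have hsum4 : Summable (fun j : ℕ => (d (r + (j + (k+1))) : ℝ) * (1/10:ℝ)^(j + (k+1) + 1)) := by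
      have h := (digits_summable (fun j => d (r + (j + (k+1)))) (fun j => hd _)).mul_left ((1/10:ℝ)^(k+1))
      apply h.congr
      intro j
      rw [show j + (k+1) + 1 = (k+1) + (j+1) from by omega, pow_add]
      ring
    calc ∑' j : ℕ, (d (r + (j + (k+1))) : ℝ) * (1/10:ℝ)^(j + (k+1) + 1)
        ≤ ∑' j : ℕ, (9:ℝ) * (1/10:ℝ)^(j + k + 2) := by
          apply Summable.tsum_le_tsum _ hsum4 hgeo
          intro j
          have hb : (d (r + (j + (k+1))) : ℝ) ≤ 9 := by exact_mod_cast hd _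
          rw [show j + (k+1) + 1 = j + k + 2 from by omega]
          gcongr
      _ = (1/10:ℝ)^(k+1) := by
          have he : (fun j : ℕ => (9:ℝ) * (1/10:ℝ)^(j + k + 2))
              = fun j : ℕ => ((9:ℝ) * (1/10:ℝ)^(k+2)) * (1/10:ℝ)^j := by
            funext j
            rw [show j + k + 2 = (k+2) + j from by omega, pow_add]
            ring
          rw [he, tsum_mul_left, tsum_geometric_of_lt_one (by norm_num) (by norm_num)]
          rw [show ((k:ℕ)+2) = (k+1)+1 from by omega, pow_add]
          norm_num
          ring
  have hfr : Int.fract T = T := by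
    rw [Int.fract_eq_self]
    constructor
    · linarith
    · have h : (1/10:ℝ)^(k+1) ≤ (1/10:ℝ)^1 := by
        apply pow_le_pow_of_le_one (by norm_num) (by norm_num); omega
      norm_num at h
      linarith
  rw [hfr, abs_le]
  constructor <;> linarith

open MeasureTheory ProbabilityTheory
open scoped ENNReal

lemma exists_pattern {Ω : Type*} [MeasurableSpace Ω] (P : Measure Ω) [IsProbabilityMeasure P]
    (D : Fin 3 × ℕ → Ω → Fin 10)
    (hmeas : ∀ p, Measurable (D p))
    (hindep : iIndepFun D P)
    (hunif : ∀ p d, P {ω | D p ω = d} = 1 / 10) (k : ℕ) :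
    ∀ᵐ ω ∂P, ∃ m : ℕ, ∀ i : Fin 3, ∀ j ≤ k,
      D (i, m*(k+1)+j) ω = if j = 0 then 5 else 0 := by
  classical
  set e : ℕ → Fin 10 := fun j => if j = 0 then 5 else 0 with he
  set s : Fin 3 × ℕ → Set Ω := fun p => D p ⁻¹' {e (p.2 % (k+1))} with hs
  set blk : ℕ → Finset (Fin 3 × ℕ) :=
    fun m => Finset.univ ×ˢ Finset.Ico (m*(k+1)) (m*(k+1)+(k+1)) with hblk
  set B : ℕ → Set Ω := fun m => ⋂ p ∈ blk m, s p with hB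
  have hms : ∀ p, MeasurableSet[MeasurableSpace.comap (D p) inferInstance] (s p) :=
    fun p => ⟨{e (p.2 % (k+1))}, measurableSet_singleton _, rfl⟩
  have hmss : ∀ p, MeasurableSet (s p) := fun p => (hmeas p) (measurableSet_singleton _)
  have hBmeas : ∀ m, MeasurableSet (B m) :=
    fun m => MeasurableSet.iInter fun p => MeasurableSet.iInter fun _ => hmss p
  have hPs : ∀ p, P (s p) = 1/10 := by
    intro p
    have h : s p = {ω | D p ω = e (p.2 % (k+1))} := by ext ω; simp [hs]
    rw [h, hunif]
  have hcard : ∀ m, (blk m).card = 3*(k+1) := by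
    intro m
    simp [hblk]
  have hPB : ∀ m, P (B m) = (1/10 : ℝ≥0∞)^(3*(k+1)) := by
    intro m
    rw [hB]
    rw [hindep.meas_biInter (fun p _ => hms p),
      Finset.prod_congr rfl (fun p _ => hPs p), Finset.prod_const, hcard]
  set q : ℝ≥0∞ := (1/10 : ℝ≥0∞)^(3*(k+1)) with hq
  set c : ℝ≥0∞ := 1 - q with hcdef
  have hq0 : q ≠ 0 := by
    simp [hq]
  have hc1 : c < 1 := ENNReal.sub_lt_self ENNReal.one_ne_top one_ne_zero hq0
  have hPBc : ∀ m, P ((B m)ᶜ) = c := by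
    intro m
    rw [prob_compl_eq_one_sub (hBmeas m), hPB m]
  set mm : Fin 3 × ℕ → MeasurableSpace Ω :=
    fun p => MeasurableSpace.comap (D p) inferInstance with hmm
  have h_le : ∀ p, mm p ≤ ‹MeasurableSpace Ω› := fun p => (hmeas p).comap_le
  -- measurability of B m w.r.t. sup σ-algebras
  have hBsup : ∀ (S : Set (Fin 3 × ℕ)) m, (↑(blk m) : Set (Fin 3 × ℕ)) ⊆ S →
      MeasurableSet[⨆ p ∈ S, mm p] (B m) := by
    intro S m hsub
    apply MeasurableSet.iInter
    intro p
    apply MeasurableSet.iInter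
    intro hp
    have hle : mm p ≤ ⨆ p ∈ S, mm p := le_iSup₂ (f := fun p _ => mm p) p (hsub hp)
    exact hle _ (hms p)
  have hC : ∀ M, P (⋂ m ∈ Finset.range M, (B m)ᶜ) = c^M := by
    intro M
    induction M with
    | zero => simp
    | succ M ih =>
      rw [Finset.range_add_one, Finset.set_biInter_insert]
      have hdisj : Disjoint {p : Fin 3 × ℕ | M*(k+1) ≤ p.2} {p : Fin 3 × ℕ | p.2 < M*(k+1)} := by
        rw [Set.disjoint_left]
        intro p hp hp'
        simp only [Set.mem_setOf_eq] at hp hp'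
        omega
      have hInd : Indep (⨆ p ∈ {p : Fin 3 × ℕ | M*(k+1) ≤ p.2}, mm p)
          (⨆ p ∈ {p : Fin 3 × ℕ | p.2 < M*(k+1)}, mm p) P :=
        indep_iSup_of_disjoint h_le hindep.iIndep hdisj
      have hm1 : MeasurableSet[⨆ p ∈ {p : Fin 3 × ℕ | M*(k+1) ≤ p.2}, mm p] ((B M)ᶜ) := by
        apply MeasurableSet.compl
        apply hBsup
        intro p hp
        simp only [hblk, Finset.coe_product, Finset.coe_univ, Set.mem_prod, Set.mem_univ,
          Finset.coe_Ico, Set.mem_Ico, true_and] at hp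
        simp only [Set.mem_setOf_eq]
        omega
      have hm2 : MeasurableSet[⨆ p ∈ {p : Fin 3 × ℕ | p.2 < M*(k+1)}, mm p]
          (⋂ m ∈ Finset.range M, (B m)ᶜ) := by
        apply MeasurableSet.iInter
        intro m
        apply MeasurableSet.iInter
        intro hm
        rw [Finset.mem_range] at hm
        apply MeasurableSet.compl
        apply hBsup
        intro p hp
        simp only [hblk, Finset.coe_product, Finset.coe_univ, Set.mem_prod, Set.mem_univ,
          Finset.coe_Ico, Set.mem_Ico, true_and] at hp
        simp only [Set.mem_setOf_eq]
        have h1 : (m+1)*(k+1) ≤ M*(k+1) := Nat.mul_le_mul_right _ (by omega)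
        have h2 : (m+1)*(k+1) = m*(k+1) + (k+1) := by ring
        omega
      rw [(Indep_iff _ _ _).mp hInd _ _ hm1 hm2, hPBc, ih, pow_succ]
      ring
  have hlim : P (⋂ m : ℕ, (B m)ᶜ) = 0 := by
    have hle : ∀ M : ℕ, P (⋂ m : ℕ, (B m)ᶜ) ≤ c^M := by
      intro M
      rw [← hC M]
      apply measure_mono
      intro ω hω
      simp only [Set.mem_iInter] at hω ⊢
      exact fun m _ => hω m
    have htend := ENNReal.tendsto_pow_atTop_nhds_zero_of_lt_one hc1
    exact le_antisymm (ge_of_tendsto' htend hle) (bot_le)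
  have hae : ∀ᵐ ω ∂P, ∃ m, ω ∈ B m := by
    rw [ae_iff]
    have hset : {ω | ¬ ∃ m, ω ∈ B m} = ⋂ m, (B m)ᶜ := by
      ext ω; simp
    rw [hset]
    exact hlim
  filter_upwards [hae] with ω hω
  obtain ⟨m, hm⟩ := hω
  refine ⟨m, fun i j hj => ?_⟩
  have hmem : (i, m*(k+1)+j) ∈ blk m := by
    simp only [hblk, Finset.mem_product, Finset.mem_univ, Finset.mem_Ico, true_and]
    omega
  have := Set.mem_iInter₂.mp hm _ hmem
  simp only [hs, Set.mem_preimage, Set.mem_singleton_iff] at this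
  rw [this]
  congr 1
  rw [Nat.add_comm, Nat.add_mul_mod_self_right, Nat.mod_eq_of_lt (by omega)]

/-- Let `(Ω, 𝔽, P)` be a probability space and, for `i ∈ {1,2,3}`
and positions `l`, let `D (i, l)` be random digits in `{0,…,9}` that are
mutually independent (over all `(i, l)`) and uniformly distributed. Define
`λ_i = ∑_l D(i,l)·10^{−(l+1)}` (the number whose `(l+1)`-st decimal digit is
`D(i,l)`). Then almost surely: for every `ε > 0` there exists `r ∈ ℕ` with
`|fract(10^r·λ_i) − 1/2| < ε` simultaneously for all `i`. -/
theorem random_digits_fract_near_half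
    {Ω : Type*} [MeasurableSpace Ω] (P : Measure Ω) [IsProbabilityMeasure P]
    (D : Fin 3 × ℕ → Ω → Fin 10)
    (hmeas : ∀ p, Measurable (D p))
    (hindep : iIndepFun D P)
    (hunif : ∀ p d, P {ω | D p ω = d} = 1 / 10) :
    ∀ᵐ ω ∂P, ∀ ε : ℝ, 0 < ε → ∃ r : ℕ, ∀ i : Fin 3,
      |Int.fract ((10 : ℝ) ^ r *
          ∑' l : ℕ, ((D (i, l) ω : ℕ) : ℝ) * (10 : ℝ) ^ (-(l : ℤ) - 1)) - 1 / 2| < ε := by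
  have hae := (MeasureTheory.ae_all_iff).mpr (fun k : ℕ => exists_pattern P D hmeas hindep hunif k)
  filter_upwards [hae] with ω hω ε hε
  obtain ⟨k, hk⟩ := exists_pow_lt_of_lt_one hε (by norm_num : (1/10:ℝ) < 1)
  obtain ⟨m, hm⟩ := hω k
  refine ⟨m*(k+1), fun i => ?_⟩
  have h5 : ((D (i, m*(k+1)) ω : Fin 10) : ℕ) = 5 := by
    have h := hm i 0 (Nat.zero_le k)
    rw [if_pos rfl] at h
    rw [Nat.add_zero] at h
    rw [h]
    rfl
  have h0 : ∀ j, 1 ≤ j → j ≤ k → ((D (i, m*(k+1)+j) ω : Fin 10) : ℕ) = 0 := by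
    intro j hj1 hjk
    have h := hm i j hjk
    rw [if_neg (by omega)] at h
    rw [h]
    rfl
  have hb := fract_bound (fun l => ((D (i, l) ω : Fin 10) : ℕ)) (fun l => Fin.is_le _)
    (m*(k+1)) k h5 h0
  calc |Int.fract ((10 : ℝ) ^ (m*(k+1)) *
          ∑' l : ℕ, ((D (i, l) ω : ℕ) : ℝ) * (10 : ℝ) ^ (-(l : ℤ) - 1)) - 1 / 2|
      ≤ (1/10:ℝ)^(k+1) := hb
    _ < (1/10:ℝ)^k := by
        apply pow_lt_pow_right_of_lt_one₀ (by norm_num) (by norm_num)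
        omega
    _ < ε := hk
end
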